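/- Let U be a real Hilbert space, G : U → (−∞,∞] proper, convex and lower semicontinuous and Lipschitz on dom(G) with constant L_G, and F : U → ℝ Fréchet differentiable with ∇F Lipschitz with constant L_{∇F} and F Lipschitz on dom(G) with constant L_F, and assume F + G is bounded from below. For v ∈ dom(G), Δ > 0 set T(v,Δ) := prox_{ΔG}(v − Δ∇F(v)), pred(v,Δ) := ⟨∇F(v), v − T(v,Δ)⟩ + G(v) − G(T(v,Δ)) − (1/(2Δ))‖T(v,Δ) − v‖², ared(v,Δ) := (F+G)(v) − (F+G)(T(v,Δ)), and fix r > 0 with criticality measure C(v) := (1/(2r²))‖v − prox_{rG}(v − r∇F(v))‖². Run the trust-region iteration: given η ∈ (0,1), 0 < γ₁ < 1 ≤ γ₂, 0 < Δ₀ < Δmax ≤ ∞, v₀ ∈ dom(G), while C(v_n) > 0 set v_{n+1} := T(v_n,Δ_n), Δ_{n+1} := min{γ₂Δ_n, Δmax} if ared(v_n,Δ_n) ≥ η·pred(v_n,Δ_n), and v_{n+1} := v_n, Δ_{n+1} := γ₁Δ_n otherwise. Then either the iteration terminates at a stationary point v̄ (i.e., −∇F(v̄) ∈ ∂G(v̄)),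 or it produces an infinite sequence (v_n) such that for EVERY r̂ > 0: ‖v_n − prox_{r̂G}(v_n − r̂∇F(v_n))‖ → 0 as n → ∞. -/

import Mathlib

open Filter
open scoped RealInnerProductSpace ENNReal Topology

/-- The proximal gradient oracle `T(v,Δ) = prox_{ΔG}(v - Δ ∇F(v))`. -/
noncomputable def proxGradOracle {U : Type*} [NormedAddCommGroup U] [InnerProductSpace ℝ U]
    (prox : ℝ → U → U) (gradF : U → U) (Δ : ℝ) (v : U) : U :=
  prox Δ (v - Δ • gradF v)

/-- The predicted reduction `pred(v,Δ) = m_{v,Δ}(v) - m_{v,Δ}(T(v,Δ))`. -/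
noncomputable def proxGradPred {U : Type*} [NormedAddCommGroup U] [InnerProductSpace ℝ U]
    (prox : ℝ → U → U) (G : U → EReal) (gradF : U → U) (Δ : ℝ) (v : U) : ℝ :=
  ⟪gradF v, v - proxGradOracle prox gradF Δ v⟫ +
    (G v).toReal - (G (proxGradOracle prox gradF Δ v)).toReal -
    1 / (2 * Δ) * ‖proxGradOracle prox gradF Δ v - v‖ ^ 2

/-- The actual reduction `ared(v,Δ) = (F+G)(v) - (F+G)(T(v,Δ))`. -/
noncomputable def proxGradAred {U : Type*} [NormedAddCommGroup U] [InnerProductSpace ℝ U]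
    (prox : ℝ → U → U) (F : U → ℝ) (G : U → EReal) (gradF : U → U) (Δ : ℝ) (v : U) : ℝ :=
  (F v + (G v).toReal) -
    (F (proxGradOracle prox gradF Δ v) + (G (proxGradOracle prox gradF Δ v)).toReal)

section AuxPG
set_option linter.unusedSectionVars false
variable {U : Type*} [NormedAddCommGroup U] [InnerProductSpace ℝ U]
variable {G : U → EReal} {prox : ℝ → U → U}

/-- The prox output is in the domain of `G`. -/
lemma pg_prox_dom (hGtop : ∃ v : U, G v ≠ ⊤)
    (hprox : ∀ r : ℝ, 0 < r → ∀ v w : U,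
      G (prox r v) + ((‖prox r v - v‖ ^ 2 / (2 * r) : ℝ) : EReal) ≤
        G w + ((‖w - v‖ ^ 2 / (2 * r) : ℝ) : EReal))
    {s : ℝ} (hs : 0 < s) (z : U) : G (prox s z) ≠ ⊤ := by
  obtain ⟨w, hw⟩ := hGtop
  have h := hprox s hs z w
  intro htop
  rw [htop] at h
  have h1 : G w + ((‖w - z‖ ^ 2 / (2 * s) : ℝ) : EReal) < ⊤ := by
    apply EReal.add_lt_top
    · simp [hw, lt_top_iff_ne_top]
    · simp [lt_top_iff_ne_top]
  have h2 : (⊤ : EReal) + ((‖prox s z - z‖ ^ 2 / (2 * s) : ℝ) : EReal) = ⊤ := by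
    rw [EReal.top_add_of_ne_bot]; exact EReal.coe_ne_bot _
  rw [h2] at h
  exact absurd h (not_le.2 h1)

/-- Real-valued version of the prox inequality. -/
lemma pg_prox_real (hGbot : ∀ v : U, G v ≠ ⊥)
    (hprox : ∀ r : ℝ, 0 < r → ∀ v w : U,
      G (prox r v) + ((‖prox r v - v‖ ^ 2 / (2 * r) : ℝ) : EReal) ≤
        G w + ((‖w - v‖ ^ 2 / (2 * r) : ℝ) : EReal))
    {s : ℝ} (hs : 0 < s) (z w : U) (hw : G w ≠ ⊤) (hp : G (prox s z) ≠ ⊤) :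
    (G (prox s z)).toReal + ‖prox s z - z‖ ^ 2 / (2 * s) ≤
      (G w).toReal + ‖w - z‖ ^ 2 / (2 * s) := by
  have h := hprox s hs z w
  rw [← EReal.coe_toReal hp (hGbot _), ← EReal.coe_toReal hw (hGbot _),
    ← EReal.coe_add, ← EReal.coe_add] at h
  exact EReal.coe_le_coe_iff.1 h

/-- Subgradient characterization of the prox. -/
lemma pg_sg (hGbot : ∀ v : U, G v ≠ ⊥)
    (hGconv : ∀ v w : U, ∀ t : ℝ, 0 ≤ t → t ≤ 1 →
      G (t • v + (1 - t) • w) ≤ (t : EReal) * G v + ((1 - t : ℝ) : EReal) * G w)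
    (hprox : ∀ r : ℝ, 0 < r → ∀ v w : U,
      G (prox r v) + ((‖prox r v - v‖ ^ 2 / (2 * r) : ℝ) : EReal) ≤
        G w + ((‖w - v‖ ^ 2 / (2 * r) : ℝ) : EReal))
    {s : ℝ} (hs : 0 < s) (z w : U) (hw : G w ≠ ⊤) (hp : G (prox s z) ≠ ⊤) :
    ⟪z - prox s z, w - prox s z⟫ ≤ s * ((G w).toReal - (G (prox s z)).toReal) := by
  set p := prox s z with hpdef
  set a := (G p).toReal
  set b := (G w).toReal
  set Q := ‖w - p‖ ^ 2 with hQ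
  have hQ0 : 0 ≤ Q := by positivity
  have key : ∀ t : ℝ, 0 < t → t ≤ 1 →
      ⟪z - p, w - p⟫ ≤ s * (b - a) + t * Q / 2 := by
    intro t ht0 ht1
    have h1 := hprox s hs z (t • w + (1 - t) • p)
    have h2 := hGconv w p t ht0.le ht1
    have h2' : G (t • w + (1 - t) • p) ≤ (((t * b + (1 - t) * a : ℝ)) : EReal) := by
      calc G (t • w + (1 - t) • p) ≤ (t : EReal) * G w + ((1 - t : ℝ) : EReal) * G p := h2
        _ = (((t * b + (1 - t) * a : ℝ)) : EReal) := by
            rw [← EReal.coe_toReal hw (hGbot w), ← EReal.coe_toReal hp (hGbot p),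
              ← EReal.coe_mul, ← EReal.coe_mul, ← EReal.coe_add]
    have h3 : G p + ((‖p - z‖ ^ 2 / (2 * s) : ℝ) : EReal) ≤
        (((t * b + (1 - t) * a + ‖t • w + (1 - t) • p - z‖ ^ 2 / (2 * s) : ℝ)) : EReal) := by
      calc G p + ((‖p - z‖ ^ 2 / (2 * s) : ℝ) : EReal)
          ≤ G (t • w + (1 - t) • p) + ((‖t • w + (1 - t) • p - z‖ ^ 2 / (2 * s) : ℝ) : EReal) := h1
        _ ≤ (((t * b + (1 - t) * a : ℝ)) : EReal) +
              ((‖t • w + (1 - t) • p - z‖ ^ 2 / (2 * s) : ℝ) : EReal) := by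
            exact add_le_add h2' le_rfl
        _ = _ := by rw [← EReal.coe_add]
    rw [← EReal.coe_toReal hp (hGbot p), ← EReal.coe_add] at h3
    have h4 : a + ‖p - z‖ ^ 2 / (2 * s) ≤
        t * b + (1 - t) * a + ‖t • w + (1 - t) • p - z‖ ^ 2 / (2 * s) :=
      EReal.coe_le_coe_iff.1 h3
    have hexp : t • w + (1 - t) • p - z = (p - z) + t • (w - p) := by
      rw [smul_sub, sub_smul, one_smul]; abel
    rw [hexp, norm_add_sq_real, real_inner_smul_right, norm_smul, Real.norm_eq_abs,
      abs_of_pos ht0] at h4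
    have hs' : 0 < 2 * s := by linarith
    have hclear := mul_le_mul_of_nonneg_right h4 hs'.le
    rw [add_mul, add_mul, div_mul_cancel₀ _ hs'.ne', div_mul_cancel₀ _ hs'.ne'] at hclear
    have h6 : ⟪z - p, w - p⟫ = - ⟪p - z, w - p⟫ := by
      rw [← inner_neg_left]; norm_num
    rw [h6, hQ]
    nlinarith [hclear, mul_pos ht0 hs, sq_nonneg t]
  refine le_of_forall_pos_le_add fun ε hε => ?_
  have htpos : 0 < min 1 (2 * ε / (Q + 1)) := by positivity
  have := key (min 1 (2 * ε / (Q + 1))) htpos (min_le_left _ _)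
  have hle : min 1 (2 * ε / (Q + 1)) * Q / 2 ≤ ε := by
    have h1 : min 1 (2 * ε / (Q + 1)) ≤ 2 * ε / (Q + 1) := min_le_right _ _
    have h2 : min 1 (2 * ε / (Q + 1)) * Q ≤ 2 * ε / (Q + 1) * Q :=
      mul_le_mul_of_nonneg_right h1 hQ0
    have h3 : 2 * ε / (Q + 1) * Q ≤ 2 * ε := by
      rw [div_mul_eq_mul_div, div_le_iff₀ (by linarith)]
      nlinarith
    linarith
  linarith

/-- Lower bound on the predicted reduction. -/
lemma pg_pred_lb (hGbot : ∀ v : U, G v ≠ ⊥)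
    (hGconv : ∀ v w : U, ∀ t : ℝ, 0 ≤ t → t ≤ 1 →
      G (t • v + (1 - t) • w) ≤ (t : EReal) * G v + ((1 - t : ℝ) : EReal) * G w)
    (hGtop : ∃ v : U, G v ≠ ⊤)
    (hprox : ∀ r : ℝ, 0 < r → ∀ v w : U,
      G (prox r v) + ((‖prox r v - v‖ ^ 2 / (2 * r) : ℝ) : EReal) ≤
        G w + ((‖w - v‖ ^ 2 / (2 * r) : ℝ) : EReal))
    (gradF : U → U) {Δ : ℝ} (hΔ : 0 < Δ) (v : U) (hv : G v ≠ ⊤) :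
    ‖proxGradOracle prox gradF Δ v - v‖ ^ 2 / (2 * Δ) ≤ proxGradPred prox G gradF Δ v := by
  set g := gradF v
  set z := v - Δ • g with hz
  set p : U := prox Δ z with hp
  have hpdom : G p ≠ ⊤ := pg_prox_dom hGtop hprox hΔ z
  have hsg := pg_sg hGbot hGconv hprox hΔ z v hv hpdom
  rw [← hp] at hsg
  have hes : z - p = (v - p) - Δ • g := by rw [hz]; abel
  rw [hes, inner_sub_left, real_inner_smul_left, real_inner_self_eq_norm_sq] at hsg
  have hcomm : ⟪g, v - p⟫ = ⟪v - p, g⟫ := real_inner_comm _ _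
  have hnrev : ‖p - v‖ = ‖v - p‖ := norm_sub_rev _ _
  show ‖p - v‖ ^ 2 / (2 * Δ) ≤ ⟪g, v - p⟫ + (G v).toReal - (G p).toReal -
    1 / (2 * Δ) * ‖p - v‖ ^ 2
  rw [hnrev, hcomm]
  have h1 : ‖v - p‖ ^ 2 / (2 * Δ) + 1 / (2 * Δ) * ‖v - p‖ ^ 2 ≤ ⟪v - p, g⟫ +
      (G v).toReal - (G p).toReal := by
    have e : ‖v - p‖ ^ 2 / (2 * Δ) + 1 / (2 * Δ) * ‖v - p‖ ^ 2 = ‖v - p‖ ^ 2 / Δ := by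
      field_simp; ring
    rw [e, div_le_iff₀ hΔ]
    nlinarith [hsg]
  linarith

/-- The predicted reduction is monotone in the trust-region radius. -/
lemma pg_pred_mono (hGbot : ∀ v : U, G v ≠ ⊥)
    (hGtop : ∃ v : U, G v ≠ ⊤)
    (hprox : ∀ r : ℝ, 0 < r → ∀ v w : U,
      G (prox r v) + ((‖prox r v - v‖ ^ 2 / (2 * r) : ℝ) : EReal) ≤
        G w + ((‖w - v‖ ^ 2 / (2 * r) : ℝ) : EReal))
    (gradF : U → U) {t Δ : ℝ} (ht : 0 < t) (htΔ : t ≤ Δ) (v : U) :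
    proxGradPred prox G gradF t v ≤ proxGradPred prox G gradF Δ v := by
  have hΔ : 0 < Δ := lt_of_lt_of_le ht htΔ
  set g := gradF v
  set p : U := prox Δ (v - Δ • g) with hp
  set q : U := prox t (v - t • g) with hq
  have hqdom : G q ≠ ⊤ := pg_prox_dom hGtop hprox ht _
  have hpdom : G p ≠ ⊤ := pg_prox_dom hGtop hprox hΔ _
  have expand : ∀ (s : ℝ), 0 < s → ∀ x : U, ‖x - (v - s • g)‖ ^ 2 / (2 * s) =
      ‖x - v‖ ^ 2 / (2 * s) + ⟪x - v, g⟫ + s * ‖g‖ ^ 2 / 2 := by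
    intro s hs x
    have e : x - (v - s • g) = (x - v) + s • g := by abel
    rw [e, norm_add_sq_real, real_inner_smul_right, norm_smul, Real.norm_eq_abs,
      abs_of_pos hs]
    field_simp
  have h1 := pg_prox_real hGbot hprox hΔ (v - Δ • g) q hqdom hpdom
  rw [← hp, expand Δ hΔ p, expand Δ hΔ q] at h1
  show ⟪g, v - q⟫ + (G v).toReal - (G q).toReal - 1 / (2 * t) * ‖q - v‖ ^ 2 ≤
    ⟪g, v - p⟫ + (G v).toReal - (G p).toReal - 1 / (2 * Δ) * ‖p - v‖ ^ 2
  have hc1 : ⟪g, v - q⟫ = - ⟪q - v, g⟫ := by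
    rw [real_inner_comm, ← inner_neg_left]; norm_num
  have hc2 : ⟪g, v - p⟫ = - ⟪p - v, g⟫ := by
    rw [real_inner_comm, ← inner_neg_left]; norm_num
  have hq2 : (0:ℝ) ≤ ‖q - v‖ ^ 2 := by positivity
  have hfrac : 1 / (2 * Δ) ≤ 1 / (2 * t) := by
    apply one_div_le_one_div_of_le (by linarith) (by linarith)
  have e1 : ‖p - v‖ ^ 2 / (2 * Δ) = 1 / (2 * Δ) * ‖p - v‖ ^ 2 := by ring
  have e2 : ‖q - v‖ ^ 2 / (2 * Δ) = 1 / (2 * Δ) * ‖q - v‖ ^ 2 := by ring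
  rw [hc1, hc2]
  rw [e1, e2] at h1
  nlinarith [mul_le_mul_of_nonneg_right hfrac hq2]

/-- The proximal gradient residual ratio is monotone in the step size. -/
lemma pg_ratio (hGbot : ∀ v : U, G v ≠ ⊥)
    (hGconv : ∀ v w : U, ∀ t : ℝ, 0 ≤ t → t ≤ 1 →
      G (t • v + (1 - t) • w) ≤ (t : EReal) * G v + ((1 - t : ℝ) : EReal) * G w)
    (hGtop : ∃ v : U, G v ≠ ⊤)
    (hprox : ∀ r : ℝ, 0 < r → ∀ v w : U,
      G (prox r v) + ((‖prox r v - v‖ ^ 2 / (2 * r) : ℝ) : EReal) ≤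
        G w + ((‖w - v‖ ^ 2 / (2 * r) : ℝ) : EReal))
    {s s' : ℝ} (hs : 0 < s) (hss' : s ≤ s') (v gv : U) :
    s * ‖v - prox s' (v - s' • gv)‖ ≤ s' * ‖v - prox s (v - s • gv)‖ := by
  have hs' : 0 < s' := lt_of_lt_of_le hs hss'
  set p : U := prox s (v - s • gv) with hp
  set q : U := prox s' (v - s' • gv) with hq
  have hpdom : G p ≠ ⊤ := pg_prox_dom hGtop hprox hs _
  have hqdom : G q ≠ ⊤ := pg_prox_dom hGtop hprox hs' _
  have h1 := pg_sg hGbot hGconv hprox hs (v - s • gv) q hqdom hpdom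
  have h2 := pg_sg hGbot hGconv hprox hs' (v - s' • gv) p hpdom hqdom
  rw [← hp] at h1
  rw [← hq] at h2
  set a := v - p with ha
  set b := v - q with hb
  have e1 : v - s • gv - p = a - s • gv := by rw [ha]; abel
  have e2 : v - s' • gv - q = b - s' • gv := by rw [hb]; abel
  have e3 : q - p = a - b := by rw [ha, hb]; abel
  have e4 : p - q = b - a := by rw [ha, hb]; abel
  rw [e1, e3] at h1
  rw [e2, e4] at h2
  clear_value p q
  clear_value a b
  rw [inner_sub_left, real_inner_smul_left] at h1
  rw [inner_sub_left, real_inner_smul_left] at h2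
  have hab : ⟪a, b⟫ ≤ ‖a‖ * ‖b‖ := real_inner_le_norm a b
  have key2 : s' * ‖a‖ ^ 2 + s * ‖b‖ ^ 2 ≤ (s + s') * (‖a‖ * ‖b‖) := by
    have expA : ⟪a, a - b⟫ = ‖a‖ ^ 2 - ⟪a, b⟫ := by
      rw [inner_sub_right, real_inner_self_eq_norm_sq]
    have expB : ⟪b, b - a⟫ = ‖b‖ ^ 2 - ⟪a, b⟫ := by
      rw [inner_sub_right, real_inner_self_eq_norm_sq, real_inner_comm b a]
    have hinner : ⟪gv, b - a⟫ = - ⟪gv, a - b⟫ := by rw [← inner_neg_right]; norm_num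
    rw [expA] at h1
    rw [expB, hinner] at h2
    have k1 := mul_le_mul_of_nonneg_left h1 hs'.le
    have k2 := mul_le_mul_of_nonneg_left h2 hs.le
    nlinarith [k1, k2,
      mul_le_mul_of_nonneg_left hab (by positivity : (0:ℝ) ≤ s + s')]
  by_contra hcon
  push_neg at hcon
  have hα : (0:ℝ) ≤ ‖a‖ := norm_nonneg a
  have hβ : (0:ℝ) ≤ ‖b‖ := norm_nonneg b
  have hβα : s * (‖b‖ - ‖a‖) > 0 := by
    nlinarith [hcon, mul_nonneg (sub_nonneg.2 hss') hα]
  nlinarith [key2, hs, mul_pos hβα (sub_pos.2 hcon)]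

end AuxPG

/-- Descent-type lemma for a function with Lipschitz gradient. -/
lemma pg_descent {U : Type*} [NormedAddCommGroup U] [InnerProductSpace ℝ U] [CompleteSpace U]
    (F : U → ℝ) (gradF : U → U) (hF : ∀ u : U, HasGradientAt F (gradF u) u)
    {L : ℝ} (hL0 : 0 ≤ L) (hlip : ∀ u w : U, ‖gradF u - gradF w‖ ≤ L * ‖u - w‖)
    (v p : U) : F p - F v - ⟪gradF v, p - v⟫ ≤ L * ‖p - v‖ ^ 2 := by
  set f : U → ℝ := fun u => F u - ⟪gradF v, u⟫ with hf
  set f' : U → (U →L[ℝ] ℝ) := fun u =>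
    (InnerProductSpace.toDual ℝ U (gradF u) : U →L[ℝ] ℝ) -
      (InnerProductSpace.toDual ℝ U (gradF v) : U →L[ℝ] ℝ) with hf'
  have hder : ∀ u : U, HasFDerivAt f (f' u) u := by
    intro u
    exact ((hF u).hasFDerivAt).sub ((InnerProductSpace.toDual ℝ U (gradF v)).hasFDerivAt)
  have hseg : ∀ u ∈ segment ℝ v p, ‖u - v‖ ≤ ‖p - v‖ := by
    rintro u ⟨ta, tb, hta, htb, htab, rfl⟩
    have e : ta • v + tb • p - v = tb • (p - v) := by
      have : ta = 1 - tb := by linarith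
      rw [this]; rw [smul_sub, sub_smul, one_smul]; abel
    rw [e, norm_smul, Real.norm_eq_abs, abs_of_nonneg htb]
    nlinarith [norm_nonneg (p - v)]
  have hbound : ∀ u ∈ segment ℝ v p, ‖f' u‖ ≤ L * ‖p - v‖ := by
    intro u hu
    have e : ‖f' u‖ = ‖gradF u - gradF v‖ := by
      rw [hf']
      simp only [← map_sub]
      exact (InnerProductSpace.toDual ℝ U).norm_map _
    rw [e]
    calc ‖gradF u - gradF v‖ ≤ L * ‖u - v‖ := hlip u v
      _ ≤ L * ‖p - v‖ := mul_le_mul_of_nonneg_left (hseg u hu) hL0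
  have hmain := (convex_segment v p).norm_image_sub_le_of_norm_hasFDerivWithin_le
    (fun u hu => (hder u).hasFDerivWithinAt) hbound (left_mem_segment ℝ v p)
    (right_mem_segment ℝ v p)
  have e2 : f p - f v = F p - F v - ⟪gradF v, p - v⟫ := by
    rw [hf]; simp only [inner_sub_right]; ring
  calc F p - F v - ⟪gradF v, p - v⟫ = f p - f v := e2.symm
    _ ≤ |f p - f v| := le_abs_self _
    _ = ‖f p - f v‖ := rfl
    _ ≤ L * ‖p - v‖ * ‖p - v‖ := hmain
    _ = L * ‖p - v‖ ^ 2 := by ring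

set_option maxHeartbeats 1000000

/-- Theorem 3.12 / `thm:OC_conv_convergence`: the trust-region method with the proximal
gradient oracle either terminates at a stationary point or the proximal gradient residual
tends to zero for every step length `r̂ > 0`. -/
theorem prox_grad_trust_region_convergence
    {U : Type*} [NormedAddCommGroup U] [InnerProductSpace ℝ U] [CompleteSpace U]
    (G : U → EReal)
    -- `G` is proper
    (hGbot : ∀ v : U, G v ≠ ⊥) (hGtop : ∃ v : U, G v ≠ ⊤)
    -- `G` is convex
    (hGconv : ∀ v w : U, ∀ t : ℝ, 0 ≤ t → t ≤ 1 →
      G (t • v + (1 - t) • w) ≤ (t : EReal) * G v + ((1 - t : ℝ) : EReal) * G w)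
    -- `G` is lower semicontinuous
    (hGlsc : LowerSemicontinuous G)
    -- `G` is Lipschitz on its domain with constant `L_G`
    (L_G : ℝ)
    (hGlip : ∀ v : U, G v ≠ ⊤ → ∀ w : U, G w ≠ ⊤ →
      |(G v).toReal - (G w).toReal| ≤ L_G * ‖v - w‖)
    -- `F` is Fréchet differentiable with gradient `gradF`
    (F : U → ℝ) (gradF : U → U) (hF : ∀ v : U, HasGradientAt F (gradF v) v)
    -- `∇F` is Lipschitz with constant `LgradF`
    (LgradF : ℝ) (hgradlip : ∀ v w : U, ‖gradF v - gradF w‖ ≤ LgradF * ‖v - w‖)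
    -- `F` is Lipschitz on the domain of `G` with constant `L_F`
    (L_F : ℝ)
    (hFlip : ∀ v : U, G v ≠ ⊤ → ∀ w : U, G w ≠ ⊤ → |F v - F w| ≤ L_F * ‖v - w‖)
    -- `F + G` is bounded from below
    (hbdd : ∃ B : ℝ, ∀ v : U, (B : EReal) ≤ (F v : EReal) + G v)
    -- `prox r v` is the (unique) minimizer of `w ↦ G w + ‖w - v‖² / (2 r)`
    (prox : ℝ → U → U)
    (hprox : ∀ r : ℝ, 0 < r → ∀ v w : U,
      G (prox r v) + ((‖prox r v - v‖ ^ 2 / (2 * r) : ℝ) : EReal) ≤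
        G w + ((‖w - v‖ ^ 2 / (2 * r) : ℝ) : EReal))
    -- fixed parameter of the criticality measure
    (r : ℝ) (hr : 0 < r)
    -- algorithmic parameters
    (η γ₁ γ₂ : ℝ) (hη0 : 0 < η) (hη1 : η < 1)
    (hγ₁0 : 0 < γ₁) (hγ₁1 : γ₁ < 1) (hγ₂ : 1 ≤ γ₂)
    (Δmax : ℝ≥0∞) (hΔmax : 0 < Δmax)
    -- the iterates of the trust-region method
    (v : ℕ → U) (Δ : ℕ → ℝ)
    (hv₀ : G (v 0) ≠ ⊤) (hΔ₀pos : 0 < Δ 0) (hΔ₀lt : ENNReal.ofReal (Δ 0) < Δmax)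
    (hstep : ∀ n : ℕ,
      0 < 1 / (2 * r ^ 2) * ‖v n - prox r (v n - r • gradF (v n))‖ ^ 2 →
      ((η * proxGradPred prox G gradF (Δ n) (v n) ≤
            proxGradAred prox F G gradF (Δ n) (v n) →
          v (n + 1) = proxGradOracle prox gradF (Δ n) (v n) ∧
          Δ (n + 1) = (min (ENNReal.ofReal (γ₂ * Δ n)) Δmax).toReal) ∧
        (¬ (η * proxGradPred prox G gradF (Δ n) (v n) ≤
            proxGradAred prox F G gradF (Δ n) (v n)) →
          v (n + 1) = v n ∧ Δ (n + 1) = γ₁ * Δ n))) :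
    -- termination at a stationary point, or vanishing residual for all `r̂ > 0`
    (∃ n : ℕ, ∀ w : U,
        G (v n) + ((⟪-gradF (v n), w - v n⟫ : ℝ) : EReal) ≤ G w) ∨
      (∀ rhat : ℝ, 0 < rhat →
        Tendsto (fun n : ℕ => ‖v n - prox rhat (v n - rhat • gradF (v n))‖)
          atTop (𝓝 0)) := by
  classical
  -- positivity of Δ after a successful update
  have hΔsucc_pos : ∀ x : ℝ, 0 < x → 0 < (min (ENNReal.ofReal (γ₂ * x)) Δmax).toReal := by
    intro x hx
    rcases le_total (ENNReal.ofReal (γ₂ * x)) Δmax with hc | hc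
    · rw [min_eq_left hc, ENNReal.toReal_ofReal (by nlinarith)]
      nlinarith
    · rw [min_eq_right hc]
      exact ENNReal.toReal_pos (ne_of_gt hΔmax)
        (ne_top_of_le_ne_top ENNReal.ofReal_ne_top hc)
  by_cases hterm : ∀ n : ℕ, 0 < 1 / (2 * r ^ 2) * ‖v n - prox r (v n - r • gradF (v n))‖ ^ 2
  · -- no termination : full convergence analysis
    right
    obtain ⟨B, hB⟩ := hbdd
    set L : ℝ := max LgradF 1 with hLdef
    have hL0 : 0 < L := lt_of_lt_of_le one_pos (le_max_right _ _)
    have hlipL : ∀ u w : U, ‖gradF u - gradF w‖ ≤ L * ‖u - w‖ := fun u w =>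
      le_trans (hgradlip u w)
        (mul_le_mul_of_nonneg_right (le_max_left _ _) (norm_nonneg _))
    set Δlo : ℝ := 1 / (2 * L) with hΔlodef
    have hΔlo : 0 < Δlo := by positivity
    set δ : ℝ := min (Δ 0) (γ₁ * Δlo) with hδdef
    have hδ : 0 < δ := lt_min hΔ₀pos (by positivity)
    have hstep' := fun n => hstep n (hterm n)
    -- guaranteed success for small radius
    have hguar : ∀ n : ℕ, G (v n) ≠ ⊤ → 0 < Δ n → Δ n ≤ Δlo →
        η * proxGradPred prox G gradF (Δ n) (v n) ≤
          proxGradAred prox F G gradF (Δ n) (v n) := by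
      intro n hdom hpos hle
      set p : U := proxGradOracle prox gradF (Δ n) (v n) with hpdef
      have hpdom : G p ≠ ⊤ := pg_prox_dom hGtop hprox hpos _
      have hdesc := pg_descent F gradF hF hL0.le hlipL (v n) p
      have hpredlb := pg_pred_lb hGbot hGconv hGtop hprox gradF hpos (v n) hdom
      rw [← hpdef] at hpredlb
      have hdiff : proxGradPred prox G gradF (Δ n) (v n) -
          proxGradAred prox F G gradF (Δ n) (v n) =
          (F p - F (v n) - ⟪gradF (v n), p - v n⟫) - 1 / (2 * Δ n) * ‖p - v n‖ ^ 2 := by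
        have hc : ⟪gradF (v n), v n - p⟫ = - ⟪gradF (v n), p - v n⟫ := by
          rw [← inner_neg_right]; norm_num
        simp only [proxGradPred, proxGradAred, ← hpdef, hc]
        ring
      have hfrac : L ≤ 1 / (2 * Δ n) := by
        have h1 : 1 / (2 * Δlo) = L := by
          rw [hΔlodef]; field_simp
        calc L = 1 / (2 * Δlo) := h1.symm
          _ ≤ 1 / (2 * Δ n) := one_div_le_one_div_of_le (by linarith) (by linarith)
      have hd0 : proxGradPred prox G gradF (Δ n) (v n) -
          proxGradAred prox F G gradF (Δ n) (v n) ≤ 0 := by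
        rw [hdiff]
        nlinarith [hdesc, mul_le_mul_of_nonneg_right hfrac (sq_nonneg ‖p - v n‖)]
      have hpred0 : 0 ≤ proxGradPred prox G gradF (Δ n) (v n) :=
        le_trans (by positivity) hpredlb
      nlinarith [hd0, hpred0]
    -- the main invariant
    have hinv : ∀ n : ℕ, G (v n) ≠ ⊤ ∧ 0 < Δ n ∧ δ ≤ Δ n := by
      intro n
      induction n with
      | zero => exact ⟨hv₀, hΔ₀pos, min_le_left _ _⟩
      | succ k ih =>
        obtain ⟨hdom, hpos, hge⟩ := ih
        by_cases hS : η * proxGradPred prox G gradF (Δ k) (v k) ≤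
            proxGradAred prox F G gradF (Δ k) (v k)
        · obtain ⟨hv1, hΔ1⟩ := (hstep' k).1 hS
          refine ⟨?_, ?_, ?_⟩
          · rw [hv1]; exact pg_prox_dom hGtop hprox hpos _
          · rw [hΔ1]; exact hΔsucc_pos _ hpos
          · rw [hΔ1]
            rcases le_total (ENNReal.ofReal (γ₂ * Δ k)) Δmax with hc | hc
            · rw [min_eq_left hc, ENNReal.toReal_ofReal (by nlinarith)]
              nlinarith
            · rw [min_eq_right hc]
              have hne : Δmax ≠ ⊤ := ne_top_of_le_ne_top ENNReal.ofReal_ne_top hc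
              have := (ENNReal.ofReal_lt_iff_lt_toReal hΔ₀pos.le hne).1 hΔ₀lt
              calc δ ≤ Δ 0 := min_le_left _ _
                _ ≤ Δmax.toReal := this.le
        · obtain ⟨hv1, hΔ1⟩ := (hstep' k).2 hS
          have hbig : Δlo < Δ k := by
            by_contra hcon
            push_neg at hcon
            exact hS (hguar k hdom hpos hcon)
          refine ⟨?_, ?_, ?_⟩
          · rw [hv1]; exact hdom
          · rw [hΔ1]; exact mul_pos hγ₁0 hpos
          · rw [hΔ1]
            calc δ ≤ γ₁ * Δlo := min_le_right _ _
              _ ≤ γ₁ * Δ k := by nlinarith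
    -- the merit function
    set Φ : ℕ → ℝ := fun n => F (v n) + (G (v n)).toReal with hΦdef
    have hpred0 : ∀ n, 0 ≤ proxGradPred prox G gradF (Δ n) (v n) := by
      intro n
      have h := pg_pred_lb hGbot hGconv hGtop hprox gradF (hinv n).2.1 (v n) (hinv n).1
      have h0 : 0 ≤ ‖proxGradOracle prox gradF (Δ n) (v n) - v n‖ ^ 2 / (2 * Δ n) :=
        div_nonneg (sq_nonneg _) (by linarith [(hinv n).2.1])
      linarith
    have hΦstep : ∀ n, (η * proxGradPred prox G gradF (Δ n) (v n) ≤
        proxGradAred prox F G gradF (Δ n) (v n)) →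
        Φ (n + 1) = Φ n - proxGradAred prox F G gradF (Δ n) (v n) := by
      intro n hS
      obtain ⟨hv1, _⟩ := (hstep' n).1 hS
      simp only [hΦdef, hv1, proxGradAred]
      ring
    have hΦmono : ∀ n, Φ (n + 1) ≤ Φ n := by
      intro n
      by_cases hS : η * proxGradPred prox G gradF (Δ n) (v n) ≤
          proxGradAred prox F G gradF (Δ n) (v n)
      · rw [hΦstep n hS]
        nlinarith [hpred0 n, hS]
      · obtain ⟨hv1, _⟩ := (hstep' n).2 hS
        simp only [hΦdef, hv1]
        exact le_refl _
    have hΦanti : Antitone Φ := antitone_nat_of_succ_le hΦmono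
    have hΦlb : ∀ n, B ≤ Φ n := by
      intro n
      have h1 := hB (v n)
      rw [← EReal.coe_toReal (hinv n).1 (hGbot _), ← EReal.coe_add] at h1
      exact EReal.coe_le_coe_iff.1 h1
    -- predicted reductions on successful iterations tend to zero
    have hsmall : ∀ ε : ℝ, 0 < ε → ∃ N : ℕ, ∀ m, N ≤ m →
        (η * proxGradPred prox G gradF (Δ m) (v m) ≤
          proxGradAred prox F G gradF (Δ m) (v m)) →
        proxGradPred prox G gradF (Δ m) (v m) < ε := by
      intro ε hε
      by_contra hcon
      push_neg at hcon
      have hfreq : ∃ᶠ m in atTop, (η * proxGradPred prox G gradF (Δ m) (v m) ≤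
          proxGradAred prox F G gradF (Δ m) (v m)) ∧
          ε ≤ proxGradPred prox G gradF (Δ m) (v m) := by
        rw [frequently_atTop]
        intro N
        obtain ⟨m, hm1, hm2, hm3⟩ := hcon N
        exact ⟨m, hm1, hm2, hm3⟩
      obtain ⟨φ, hφmono, hφ⟩ := extraction_of_frequently_atTop hfreq
      have hdropk : ∀ k, Φ (φ k + 1) ≤ Φ (φ k) - η * ε := by
        intro k
        obtain ⟨hS, hP⟩ := hφ k
        rw [hΦstep (φ k) hS]
        nlinarith [hS, hP]
      have hiter : ∀ k : ℕ, Φ (φ k + 1) ≤ Φ 0 - η * ε * (k + 1) := by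
        intro k
        induction k with
        | zero =>
          have := hdropk 0
          have h2 : Φ (φ 0) ≤ Φ 0 := hΦanti (Nat.zero_le _)
          push_cast
          linarith
        | succ k ih =>
          have h1 := hdropk (k + 1)
          have h2 : Φ (φ (k + 1)) ≤ Φ (φ k + 1) := hΦanti (hφmono (Nat.lt_succ_self k))
          push_cast
          push_cast at ih
          linarith
      obtain ⟨k, hk⟩ := exists_nat_gt ((Φ 0 - B) / (η * ε))
      have hηε : 0 < η * ε := by positivity
      have h1 := hiter k
      have h2 := hΦlb (φ k + 1)
      rw [div_lt_iff₀ hηε] at hk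
      nlinarith [h1, h2, hk]
    -- infinitely many successful iterations
    have hinfS : ∀ N : ℕ, ∃ m : ℕ, N ≤ m ∧
        η * proxGradPred prox G gradF (Δ m) (v m) ≤
          proxGradAred prox F G gradF (Δ m) (v m) := by
      intro N
      by_contra hcon
      push_neg at hcon
      have hgeo : ∀ k : ℕ, Δ (N + k) = γ₁ ^ k * Δ N := by
        intro k
        induction k with
        | zero => simp
        | succ k ih =>
          have hfail := not_le.2 (hcon (N + k) (Nat.le_add_right _ _))
          obtain ⟨_, hΔ1⟩ := (hstep' (N + k)).2 hfail
          rw [show N + (k + 1) = (N + k) + 1 from rfl, hΔ1, ih]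
          ring
      have hΔN := (hinv N).2.1
      obtain ⟨k, hk⟩ := exists_pow_lt_of_lt_one (div_pos hδ hΔN) hγ₁1
      have h1 := (hinv (N + k)).2.2
      rw [hgeo k] at h1
      rw [lt_div_iff₀ hΔN] at hk
      linarith
    -- conclusion : vanishing residual
    intro rhat hrhat
    set t : ℝ := min δ rhat with htdef
    have ht0 : 0 < t := lt_min hδ hrhat
    have htδ : t ≤ δ := min_le_left _ _
    have htr : t ≤ rhat := min_le_right _ _
    rw [Metric.tendsto_atTop]
    intro ε hε
    set c : ℝ := ε * t / rhat with hcdef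
    have hc : 0 < c := by positivity
    set ε' : ℝ := c ^ 2 / (2 * t) with hε'def
    have hε'pos : 0 < ε' := by positivity
    obtain ⟨N₁, hN₁⟩ := hsmall ε' hε'pos
    refine ⟨N₁, fun n hn => ?_⟩
    obtain ⟨m, ⟨hmn, hmS⟩, hmmin⟩ : ∃ m, (n ≤ m ∧
        η * proxGradPred prox G gradF (Δ m) (v m) ≤
          proxGradAred prox F G gradF (Δ m) (v m)) ∧
        ∀ j, j < m → ¬(n ≤ j ∧ η * proxGradPred prox G gradF (Δ j) (v j) ≤
          proxGradAred prox F G gradF (Δ j) (v j)) := by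
      have hexm : ∃ m, n ≤ m ∧ η * proxGradPred prox G gradF (Δ m) (v m) ≤
          proxGradAred prox F G gradF (Δ m) (v m) := by
        obtain ⟨m, h1, h2⟩ := hinfS n
        exact ⟨m, h1, h2⟩
      exact ⟨Nat.find hexm, Nat.find_spec hexm, fun j hj => Nat.find_min hexm hj⟩
    have hvmn : v m = v n := by
      have haux : ∀ d : ℕ, n + d ≤ m → v (n + d) = v n := by
        intro d
        induction d with
        | zero => intro _; simp
        | succ d ih =>
          intro hd
          have hd' : n + d < m := by omega
          have hfail : ¬ (η * proxGradPred prox G gradF (Δ (n + d)) (v (n + d)) ≤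
              proxGradAred prox F G gradF (Δ (n + d)) (v (n + d))) :=
            fun hS => hmmin (n + d) hd' ⟨by omega, hS⟩
          have hv1 := ((hstep' (n + d)).2 hfail).1
          rw [show n + (d + 1) = (n + d) + 1 from rfl, hv1, ih (by omega)]
      have := haux (m - n) (by omega)
      rwa [Nat.add_sub_cancel' hmn] at this
    have hpm := hN₁ m (le_trans hn hmn) hmS
    have hmono := pg_pred_mono hGbot hGtop hprox gradF ht0
      (le_trans htδ (hinv m).2.2) (v m)
    have hlb := pg_pred_lb hGbot hGconv hGtop hprox gradF ht0 (v m) (hinv m).1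
    set ψ : ℝ := ‖v m - prox t (v m - t • gradF (v m))‖ with hψdef
    have hψlb : ψ ^ 2 / (2 * t) ≤ proxGradPred prox G gradF t (v m) := by
      have e : proxGradOracle prox gradF t (v m) = prox t (v m - t • gradF (v m)) := rfl
      rw [e, norm_sub_rev] at hlb
      exact hlb
    have hψ2 : ψ ^ 2 < c ^ 2 := by
      have h1 : ψ ^ 2 / (2 * t) < ε' := lt_of_le_of_lt (le_trans hψlb hmono) hpm
      rw [hε'def] at h1
      have h2 := mul_lt_mul_of_pos_right h1 (show (0:ℝ) < 2 * t by linarith)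
      rw [div_mul_cancel₀ _ (show (2:ℝ) * t ≠ 0 by positivity),
        div_mul_cancel₀ _ (show (2:ℝ) * t ≠ 0 by positivity)] at h2
      exact h2
    have hψc : ψ < c := lt_of_pow_lt_pow_left₀ 2 hc.le hψ2
    have hratio := pg_ratio hGbot hGconv hGtop hprox ht0 htr (v m) (gradF (v m))
    rw [← hψdef] at hratio
    have hρ : ‖v m - prox rhat (v m - rhat • gradF (v m))‖ < ε := by
      have h2 : t * ‖v m - prox rhat (v m - rhat • gradF (v m))‖ < rhat * c :=
        lt_of_le_of_lt hratio (mul_lt_mul_of_pos_left hψc hrhat)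
      have h3 : rhat * c = ε * t := by
        rw [hcdef]; field_simp
      nlinarith [h2, ht0]
    have hnn : 0 ≤ ‖v n - prox rhat (v n - rhat • gradF (v n))‖ := norm_nonneg _
    rw [Real.dist_eq, sub_zero, abs_of_nonneg hnn, ← hvmn]
    exact hρ
  · -- termination at a stationary point
    left
    push_neg at hterm
    have hex : ∃ n : ℕ, 1 / (2 * r ^ 2) * ‖v n - prox r (v n - r • gradF (v n))‖ ^ 2 ≤ 0 :=
      hterm
    obtain ⟨N, hspec, hmin⟩ : ∃ N : ℕ,
        (1 / (2 * r ^ 2) * ‖v N - prox r (v N - r • gradF (v N))‖ ^ 2 ≤ 0) ∧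
        ∀ m, m < N →
          0 < 1 / (2 * r ^ 2) * ‖v m - prox r (v m - r • gradF (v m))‖ ^ 2 :=
      ⟨Nat.find hex, Nat.find_spec hex, fun m hm => not_le.1 (Nat.find_min hex hm)⟩
    have hdomΔ : ∀ m, m ≤ N → G (v m) ≠ ⊤ ∧ 0 < Δ m := by
      intro m
      induction m with
      | zero => exact fun _ => ⟨hv₀, hΔ₀pos⟩
      | succ k ih =>
        intro hk
        have hk' : k < N := lt_of_lt_of_le (Nat.lt_succ_self k) hk
        obtain ⟨hdom, hpos⟩ := ih hk'.le
        obtain ⟨h1, h2⟩ := hstep k (hmin k hk')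
        by_cases hS : η * proxGradPred prox G gradF (Δ k) (v k) ≤
            proxGradAred prox F G gradF (Δ k) (v k)
        · obtain ⟨hv1, hΔ1⟩ := h1 hS
          constructor
          · rw [hv1]; exact pg_prox_dom hGtop hprox hpos _
          · rw [hΔ1]; exact hΔsucc_pos _ hpos
        · obtain ⟨hv1, hΔ1⟩ := h2 hS
          constructor
          · rw [hv1]; exact hdom
          · rw [hΔ1]; exact mul_pos hγ₁0 hpos
    have hfix : v N = prox r (v N - r • gradF (v N)) := by
      have h2r : (0:ℝ) < 1 / (2 * r ^ 2) := by positivity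
      have hsq : ‖v N - prox r (v N - r • gradF (v N))‖ ^ 2 ≤ 0 := by
        nlinarith [hspec, sq_nonneg ‖v N - prox r (v N - r • gradF (v N))‖]
      have hz : ‖v N - prox r (v N - r • gradF (v N))‖ = 0 := by
        nlinarith [norm_nonneg (v N - prox r (v N - r • gradF (v N)))]
      have := norm_eq_zero.1 hz
      exact (sub_eq_zero.1 this)
    refine ⟨N, fun w => ?_⟩
    by_cases hw : G w = ⊤
    · rw [hw]; exact le_top
    have hNdom : G (v N) ≠ ⊤ := (hdomΔ N le_rfl).1
    have hpdom : G (prox r (v N - r • gradF (v N))) ≠ ⊤ := by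
      rw [← hfix]; exact hNdom
    have hsg := pg_sg hGbot hGconv hprox hr (v N - r • gradF (v N)) w hw hpdom
    rw [← hfix] at hsg
    have e : v N - r • gradF (v N) - v N = -(r • gradF (v N)) := by abel
    rw [e, inner_neg_left, real_inner_smul_left] at hsg
    have hkey : ⟪-gradF (v N), w - v N⟫ ≤ (G w).toReal - (G (v N)).toReal := by
      rw [inner_neg_left]
      nlinarith [hsg]
    rw [← EReal.coe_toReal hNdom (hGbot _), ← EReal.coe_toReal hw (hGbot _),
      ← EReal.coe_add]
    exact EReal.coe_le_coe_iff.2 (by linarith)
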